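/- In the node-activation model, the entrywise expectation of the squared random Laplacian satisfies E[L_1²] = p³ (L_G² − 2 L_G) + 2 p² L_G. -/

import Mathlib

open MeasureTheory ProbabilityTheory Matrix

noncomputable section

/-- The real-valued indicator of a Boolean. -/
def ind (b : Bool) : ℝ := if b then 1 else 0

/-- Adjacency matrix of the random induced subgraph: edge {i,j} of `G` is kept
iff both endpoints are active. -/
def A1 {N : ℕ} (G : SimpleGraph (Fin N)) [DecidableRel G.Adj] (X : Fin N → Bool) :
    Matrix (Fin N) (Fin N) ℝ :=
  Matrix.of fun i j => (G.adjMatrix ℝ) i j * ind (X i) * ind (X j)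

/-- Diagonal degree matrix of the random induced subgraph. -/
def D1 {N : ℕ} (G : SimpleGraph (Fin N)) [DecidableRel G.Adj] (X : Fin N → Bool) :
    Matrix (Fin N) (Fin N) ℝ :=
  Matrix.diagonal fun i => ∑ j, A1 G X i j

/-- Laplacian of the random induced subgraph. -/
def L1 {N : ℕ} (G : SimpleGraph (Fin N)) [DecidableRel G.Adj] (X : Fin N → Bool) :
    Matrix (Fin N) (Fin N) ℝ :=
  D1 G X - A1 G X

lemma ind_mul_self (b : Bool) : ind b * ind b = ind b := by cases b <;> simp [ind]

/-- Coefficient of `z i * z m * z n` in the expansion of `(L1 * L1) i j`. -/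
def Cc {N : ℕ} (a : Fin N → Fin N → ℝ) (i j m n : Fin N) : ℝ :=
  (if i = j then a i m * a i n else 0) - (if n = j then a i m * a i j else 0)
    - (if m = j then a i j * a j n else 0) + (if n = j then a i m * a m j else 0)

/-- Correction terms coming from coincidences of indices. -/
def Dd {N : ℕ} (p : ℝ) (a : Fin N → Fin N → ℝ) (i j m n : Fin N) : ℝ :=
  (p ^ 2 - p ^ 3) *
    ((if n = m then (if i = j then a i m else 0) else 0)
      + (if n = j then (if i = j then a i m else 0) else 0)
      - (if n = j then (if m = j then a i j else 0) else 0)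
      - (if n = i then (if m = j then a i j else 0) else 0))

lemma expand_sq {N : ℕ} (a : Fin N → Fin N → ℝ) (z : Fin N → ℝ) (hz : ∀ v, z v * z v = z v)
    (i j : Fin N) :
    ((Matrix.diagonal (fun u => ∑ v, a u v * z u * z v)
        - Matrix.of fun u v => a u v * z u * z v) *
      (Matrix.diagonal (fun u => ∑ v, a u v * z u * z v)
        - Matrix.of fun u v => a u v * z u * z v)) i j
      = ∑ m, ∑ n, Cc a i j m n * (z i * z m * z n) := by
  set d : Fin N → ℝ := fun u => ∑ v, a u v * z u * z v with hd
  have hS1 : ∑ k, (if i = k then d i else 0) * (if k = j then d k else 0)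
      = (if i = j then d i * d i else 0) := by
    simp only [ite_mul, zero_mul, Finset.sum_ite_eq, Finset.mem_univ, if_true, mul_ite, mul_zero,
      Finset.sum_ite_eq']
    by_cases h : i = j <;> simp [h]
  have hS2 : ∑ k, (if i = k then d i else 0) * (a k j * z k * z j)
      = d i * (a i j * z i * z j) := by
    simp only [ite_mul, zero_mul, Finset.sum_ite_eq, Finset.mem_univ, if_true]
  have hS3 : ∑ k, (a i k * z i * z k) * (if k = j then d k else 0)
      = (a i j * z i * z j) * d j := by
    simp only [mul_ite, mul_zero, Finset.sum_ite_eq', Finset.mem_univ, if_true]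
  have hL : ((Matrix.diagonal d - Matrix.of fun u v => a u v * z u * z v) *
      (Matrix.diagonal d - Matrix.of fun u v => a u v * z u * z v)) i j
      = (if i = j then d i * d i else 0) - d i * (a i j * z i * z j)
        - (a i j * z i * z j) * d j + ∑ k, (a i k * z i * z k) * (a k j * z k * z j) := by
    rw [Matrix.mul_apply]
    have e : ∀ k ∈ Finset.univ,
        ((Matrix.diagonal d - Matrix.of fun u v => a u v * z u * z v) i k) *
        ((Matrix.diagonal d - Matrix.of fun u v => a u v * z u * z v) k j)
        = (if i = k then d i else 0) * (if k = j then d k else 0)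
          - (if i = k then d i else 0) * (a k j * z k * z j)
          - (a i k * z i * z k) * (if k = j then d k else 0)
          + (a i k * z i * z k) * (a k j * z k * z j) := by
      intro k _
      simp only [Matrix.sub_apply, Matrix.diagonal_apply, Matrix.of_apply]
      ring
    rw [Finset.sum_congr rfl e, Finset.sum_add_distrib, Finset.sum_sub_distrib,
      Finset.sum_sub_distrib, hS1, hS2, hS3]
  rw [hL]
  have h1 : (if i = j then d i * d i else 0)
      = ∑ m, ∑ n, (if i = j then a i m * a i n else 0) * (z i * z m * z n) := by
    by_cases h : i = j
    · subst h
      simp only [if_true]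
      rw [hd]
      rw [Finset.sum_mul_sum]
      exact Finset.sum_congr rfl fun m _ => Finset.sum_congr rfl fun n _ => by
        linear_combination (a i m * a i n * z m * z n) * hz i
    · simp [h]
  have h2 : d i * (a i j * z i * z j)
      = ∑ m, ∑ n, (if n = j then a i m * a i j else 0) * (z i * z m * z n) := by
    simp only [ite_mul, zero_mul, Finset.sum_ite_eq', Finset.mem_univ, if_true]
    rw [hd, Finset.sum_mul]
    exact Finset.sum_congr rfl fun m _ => by
      linear_combination (a i m * a i j * z m * z j) * hz i
  have h3 : (a i j * z i * z j) * d j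
      = ∑ m, ∑ n, (if m = j then a i j * a j n else 0) * (z i * z m * z n) := by
    rw [Finset.sum_comm]
    simp only [ite_mul, zero_mul, Finset.sum_ite_eq', Finset.mem_univ, if_true]
    rw [hd, Finset.mul_sum]
    exact Finset.sum_congr rfl fun n _ => by
      linear_combination (a i j * a j n * z i * z n) * hz j
  have h4 : (∑ k, (a i k * z i * z k) * (a k j * z k * z j))
      = ∑ m, ∑ n, (if n = j then a i m * a m j else 0) * (z i * z m * z n) := by
    simp only [ite_mul, zero_mul, Finset.sum_ite_eq', Finset.mem_univ, if_true]
    exact Finset.sum_congr rfl fun k _ => by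
      linear_combination (a i k * a k j * z i * z j) * hz k
  rw [h1, h2, h3, h4]
  simp only [Cc, sub_mul, add_mul, Finset.sum_sub_distrib, Finset.sum_add_distrib]

lemma key {N : ℕ} (p : ℝ) (a : Fin N → Fin N → ℝ) (ha0 : ∀ v, a v v = 0)
    (hsym : ∀ u v, a u v = a v u) (hid : ∀ u v, a u v * a u v = a u v)
    (i j m n : Fin N) :
    Cc a i j m n * p ^ (({i, m, n} : Finset (Fin N)).card)
      = p ^ 3 * Cc a i j m n + Dd p a i j m n := by
  by_cases hmi : m = i
  · subst hmi
    by_cases hni : n = m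
    · subst hni
      by_cases hij : n = j <;> simp [Cc, Dd, hij, ha0]
    · by_cases hij : m = j
      · subst hij
        simp [Cc, Dd, hni, ha0, Ne.symm hni]
      · simp [Cc, Dd, hni, hij, ha0, Ne.symm hni]
  · by_cases hni : n = i
    · subst hni
      have hcard : ({n, m, n} : Finset (Fin N)).card = 2 := by
        rw [Finset.card_insert_of_mem (by simp), Finset.card_insert_of_notMem (by simp [hmi]),
          Finset.card_singleton]
      rw [hcard]
      by_cases hij : n = j
      · subst hij
        simp only [Cc, Dd, hmi, ha0, if_pos rfl, if_true, if_false, if_neg hmi,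
          if_neg (show ¬n = m from fun h => hmi h.symm), mul_zero, zero_mul, sub_zero, zero_sub,
          add_zero, zero_add, neg_zero]
        rw [← hsym n m]
        linear_combination (p ^ 2 - p ^ 3) * hid n m
      · by_cases hmj : m = j
        · subst hmj
          simp only [Cc, Dd, if_pos rfl, if_true, if_neg hij, if_neg (fun h : n = m => hij h),
            ha0, mul_zero, zero_mul, sub_zero, zero_sub, add_zero, zero_add, neg_zero]
          rw [← hsym n m]
          linear_combination (-(p ^ 2) + p ^ 3) * hid n m
        · simp [Cc, Dd, hij, hmj, fun h : n = m => hmi h.symm, ha0]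
    · by_cases hnm : n = m
      · subst hnm
        have hcard : ({i, n, n} : Finset (Fin N)).card = 2 := by
          rw [Finset.card_insert_of_notMem (by simp [Ne.symm hni]),
            Finset.card_insert_of_mem (Finset.mem_singleton_self n), Finset.card_singleton]
        rw [hcard]
        by_cases hij : i = j
        · subst hij
          simp only [Cc, Dd, if_pos rfl, if_true, if_neg hni, mul_zero, zero_mul, sub_zero,
            zero_sub, add_zero, zero_add, neg_zero]
          linear_combination (p ^ 2 - p ^ 3) * hid i n
        · by_cases hmj : n = j
          · subst hmj
            simp only [Cc, Dd, if_pos rfl, if_true, if_neg hij, if_neg hni, ha0, mul_zero,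
              zero_mul, sub_zero, zero_sub, add_zero, zero_add, neg_zero]
            linear_combination (-(p ^ 2) + p ^ 3) * hid i n
          · simp [Cc, Dd, hij, hmj, hni, ha0]
      · have hcard : ({i, m, n} : Finset (Fin N)).card = 3 := by
          rw [Finset.card_insert_of_notMem (by simp [Ne.symm hmi, Ne.symm hni]),
            Finset.card_insert_of_notMem (by simp [Ne.symm hnm]), Finset.card_singleton]
        rw [hcard]
        have hT2 : Dd p a i j m n = 0 := by
          simp only [Dd, if_neg hnm, if_neg hni]
          by_cases hnj : n = j
          · subst hnj
            simp [Ne.symm hni]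
            exact fun h => absurd h.symm hnm
          · simp [hnj]
        rw [hT2]
        ring

section Prob
variable {N : ℕ} {Ω : Type*} [MeasurableSpace Ω]

lemma ind3_indicator (X : Fin N → Ω → Bool) (i m n : Fin N) :
    (fun ω => ind (X i ω) * ind (X m ω) * ind (X n ω))
      = Set.indicator ({ω | X i ω = true} ∩ ({ω | X m ω = true} ∩ {ω | X n ω = true}))
          (fun _ => (1 : ℝ)) := by
  funext ω
  by_cases h1 : X i ω = true <;> by_cases h2 : X m ω = true <;> by_cases h3 : X n ω = true <;>
    simp [ind, Set.indicator_apply, Set.mem_setOf_eq, h1, h2, h3]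

lemma measurable_true_set (X : Fin N → Ω → Bool) (hmeas : ∀ i, Measurable (X i)) (v : Fin N) :
    MeasurableSet {ω | X v ω = true} := by
  have h : {ω | X v ω = true} = X v ⁻¹' {true} := by ext ω; simp
  rw [h]
  exact hmeas v (by trivial)

lemma integrable3 (μ : Measure Ω) [IsProbabilityMeasure μ] (X : Fin N → Ω → Bool)
    (hmeas : ∀ i, Measurable (X i)) (i m n : Fin N) :
    Integrable (fun ω => ind (X i ω) * ind (X m ω) * ind (X n ω)) μ := by
  rw [ind3_indicator]
  exact (integrable_const 1).indicator
    ((measurable_true_set X hmeas i).inter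
      ((measurable_true_set X hmeas m).inter (measurable_true_set X hmeas n)))

lemma E3 (μ : Measure Ω) [IsProbabilityMeasure μ] (p : ℝ) (hp0 : 0 ≤ p)
    (X : Fin N → Ω → Bool) (hmeas : ∀ i, Measurable (X i))
    (hindep : iIndepFun X μ)
    (hbern : ∀ i, μ {ω | X i ω = true} = ENNReal.ofReal p) (i m n : Fin N) :
    ∫ ω, ind (X i ω) * ind (X m ω) * ind (X n ω) ∂μ
      = p ^ (({i, m, n} : Finset (Fin N)).card) := by
  rw [ind3_indicator, integral_indicator_const (1 : ℝ)
    ((measurable_true_set X hmeas i).inter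
      ((measurable_true_set X hmeas m).inter (measurable_true_set X hmeas n)))]
  have hset : {ω | X i ω = true} ∩ ({ω | X m ω = true} ∩ {ω | X n ω = true})
      = ⋂ v ∈ ({i, m, n} : Finset (Fin N)), {ω | X v ω = true} := by
    rw [Finset.set_biInter_insert, Finset.set_biInter_insert, Finset.set_biInter_singleton]
  rw [hset, measureReal_def, hindep.meas_biInter (fun v _ => ⟨{true}, trivial, by ext ω; simp⟩)]
  have h : ∀ v ∈ ({i, m, n} : Finset (Fin N)), μ {ω | X v ω = true} = ENNReal.ofReal p :=
    fun v _ => hbern v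
  rw [Finset.prod_congr rfl h, Finset.prod_const, ENNReal.toReal_pow,
    ENNReal.toReal_ofReal hp0, smul_eq_mul, mul_one]

end Prob

theorem stmt7 {N : ℕ} (G : SimpleGraph (Fin N)) [DecidableRel G.Adj]
    {Ω : Type*} [MeasurableSpace Ω] (μ : Measure Ω) [IsProbabilityMeasure μ]
    (p : ℝ) (hp0 : 0 ≤ p) (hp1 : p ≤ 1)
    (X : Fin N → Ω → Bool)
    (hmeas : ∀ i, Measurable (X i))
    (hindep : iIndepFun X μ)
    (hbern : ∀ i, μ {ω | X i ω = true} = ENNReal.ofReal p) :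
    ∀ i j, ∫ ω, (L1 G (fun v => X v ω) * L1 G (fun v => X v ω)) i j ∂μ
      = (p ^ 3 • (G.lapMatrix ℝ * G.lapMatrix ℝ - 2 • G.lapMatrix ℝ)
          + (2 * p ^ 2) • G.lapMatrix ℝ) i j := by
  intro i j
  set a : Fin N → Fin N → ℝ := fun u v => (G.adjMatrix ℝ) u v with ha
  have ha0 : ∀ v, a v v = 0 := fun v => by simp [ha]
  have hsym : ∀ u v, a u v = a v u := fun u v => by
    simp [ha, SimpleGraph.adjMatrix_apply, SimpleGraph.adj_comm]
  have hid : ∀ u v, a u v * a u v = a u v := fun u v => by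
    by_cases h : G.Adj u v <;> simp [ha, h]
  have hpt : ∀ ω, (L1 G (fun v => X v ω) * L1 G (fun v => X v ω)) i j
      = ∑ m, ∑ n, Cc a i j m n * (ind (X i ω) * ind (X m ω) * ind (X n ω)) := by
    intro ω
    have hL : L1 G (fun v => X v ω)
        = Matrix.diagonal (fun u => ∑ v, a u v * ind (X u ω) * ind (X v ω))
          - Matrix.of fun u v => a u v * ind (X u ω) * ind (X v ω) := rfl
    rw [hL, expand_sq a _ (fun v => ind_mul_self _) i j]
  have hlap : G.lapMatrix ℝ
      = Matrix.diagonal (fun u => ∑ v, a u v * (1 : ℝ) * 1)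
        - Matrix.of fun u v => a u v * 1 * 1 := by
    ext u v
    by_cases h : u = v <;>
      simp [SimpleGraph.lapMatrix, SimpleGraph.degMatrix, Matrix.sub_apply, Matrix.diagonal_apply,
        Matrix.of_apply, h, ha, SimpleGraph.degree_eq_sum_if_adj, SimpleGraph.adjMatrix_apply]
  have hCsum : ∑ m, ∑ n, Cc a i j m n = (G.lapMatrix ℝ * G.lapMatrix ℝ) i j := by
    rw [hlap, expand_sq a (fun _ => (1 : ℝ)) (fun v => by norm_num) i j]
    simp
  have hLij : G.lapMatrix ℝ i j = (if i = j then ∑ v, a i v else 0) - a i j := by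
    rw [hlap]
    by_cases h : i = j <;>
      simp [Matrix.sub_apply, Matrix.diagonal_apply, Matrix.of_apply, h]
  have hDsum : ∑ m, ∑ n, Dd p a i j m n = (p ^ 2 - p ^ 3) * (2 * G.lapMatrix ℝ i j) := by
    rw [hLij]
    simp only [Dd, ← Finset.mul_sum]
    congr 1
    rw [show ∀ x y : ℝ, 2 * (x - y) = (x + x) - y - y from fun x y => by ring]
    by_cases h : i = j
    · subst h
      simp [Finset.sum_add_distrib, Finset.sum_sub_distrib, Finset.sum_ite_eq',
        Finset.sum_ite_eq, ha0]
    · simp [Finset.sum_add_distrib, Finset.sum_sub_distrib, Finset.sum_ite_eq',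
        Finset.sum_ite_eq, h, ha0]
  calc ∫ ω, (L1 G (fun v => X v ω) * L1 G (fun v => X v ω)) i j ∂μ
      = ∫ ω, ∑ m, ∑ n, Cc a i j m n * (ind (X i ω) * ind (X m ω) * ind (X n ω)) ∂μ := by
        simp only [hpt]
    _ = ∑ m, ∑ n, Cc a i j m n * p ^ (({i, m, n} : Finset (Fin N)).card) := by
        rw [integral_finset_sum _ (fun m _ => integrable_finset_sum _
          (fun n _ => (integrable3 μ X hmeas i m n).const_mul _))]
        refine Finset.sum_congr rfl fun m _ => ?_
        rw [integral_finset_sum _ (fun n _ => (integrable3 μ X hmeas i m n).const_mul _)]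
        refine Finset.sum_congr rfl fun n _ => ?_
        rw [integral_const_mul, E3 μ p hp0 X hmeas hindep hbern i m n]
    _ = ∑ m, ∑ n, (p ^ 3 * Cc a i j m n + Dd p a i j m n) :=
        Finset.sum_congr rfl fun m _ => Finset.sum_congr rfl fun n _ =>
          key p a ha0 hsym hid i j m n
    _ = p ^ 3 * (∑ m, ∑ n, Cc a i j m n) + ∑ m, ∑ n, Dd p a i j m n := by
        simp [Finset.sum_add_distrib, Finset.mul_sum]
    _ = (p ^ 3 • (G.lapMatrix ℝ * G.lapMatrix ℝ - 2 • G.lapMatrix ℝ)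
          + (2 * p ^ 2) • G.lapMatrix ℝ) i j := by
        rw [hCsum, hDsum]
        simp only [Matrix.add_apply, Matrix.smul_apply, Matrix.sub_apply]
        simp only [smul_eq_mul, nsmul_eq_mul, Nat.cast_ofNat]
        ring

end
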